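/- One-step Łojasiewicz-type inequality for entropy-regularized softmax bandits: let λ > 0, r : A → ℝ bounded, π* the Gibbs distribution π*(a) ∝ exp(r(a)/λ), and suppose ‖∇V_λ(θ)‖ ≤ ε where ∇V_λ has coordinates π_θ(b)(r(b) - λ log π_θ(b) - V_λ(θ)). Then V_λ* - V_λ(θ) ≤ ε²/(2λ C) where V_λ* = λ log ∑_a exp(r(a)/λ) and C = (min_a π_θ(a))². -/

import Mathlib

open Real Finset

noncomputable def softmax {A : Type*} [Fintype A] (θ : A → ℝ) (a : A) : ℝ :=
  Real.exp (θ a) / ∑ a', Real.exp (θ a')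

noncomputable def Vlam {A : Type*} [Fintype A] (lam : ℝ) (r : A → ℝ) (θ : A → ℝ) : ℝ :=
  ∑ a, softmax θ a * (r a - lam * Real.log (softmax θ a))

theorem entreg_lojasiewicz {A : Type*} [Fintype A] [Nonempty A]
    (lam : ℝ) (hlam : 0 < lam) (θ : A → ℝ) (r : A → ℝ) (ε : ℝ)
    (hgrad : Real.sqrt (∑ b,
        (softmax θ b * (r b - lam * Real.log (softmax θ b) - Vlam lam r θ)) ^ 2) ≤ ε) :
    lam * Real.log (∑ a, Real.exp (r a / lam)) - Vlam lam r θ ≤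
      ε ^ 2 / (2 * lam * (Finset.univ.inf' Finset.univ_nonempty (softmax θ)) ^ 2) := by
  classical
  set p : A → ℝ := softmax θ with hp
  have hZ : (0:ℝ) < ∑ a', Real.exp (θ a') :=
    Finset.sum_pos (fun a _ => Real.exp_pos _) Finset.univ_nonempty
  have hppos : ∀ a, 0 < p a := fun a => div_pos (Real.exp_pos _) hZ
  have hpsum : ∑ a, p a = 1 := by
    simp only [hp, softmax]
    rw [← Finset.sum_div, div_self hZ.ne']
  have hlogp : ∀ a, Real.log (p a) = θ a - Real.log (∑ a', Real.exp (θ a')) := by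
    intro a
    simp only [hp, softmax]
    rw [Real.log_div (Real.exp_pos _).ne' hZ.ne', Real.log_exp]
  set L : ℝ := Real.log (∑ a', Real.exp (θ a')) with hL
  set d : A → ℝ := fun a => r a / lam - θ a with hd
  set c : ℝ := ∑ a, p a * d a with hc
  set x : A → ℝ := fun a => d a - c with hx
  -- key: r a - lam * log (p a) = lam * (d a + L)
  have hkey : ∀ a, r a - lam * Real.log (p a) = lam * (d a + L) := by
    intro a
    rw [hlogp a]
    simp only [hd]
    field_simp
    ring
  have hV : Vlam lam r θ = lam * (c + L) := by
    simp only [Vlam, ← hp]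
    calc ∑ a, p a * (r a - lam * Real.log (p a))
        = ∑ a, (lam * (p a * d a) + lam * L * p a) := by
          refine Finset.sum_congr rfl fun a _ => ?_
          rw [hkey a]; ring
      _ = lam * (∑ a, p a * d a) + lam * L * ∑ a, p a := by
          rw [Finset.sum_add_distrib, ← Finset.mul_sum, ← Finset.mul_sum]
      _ = lam * (c + L) := by rw [hpsum, ← hc]; ring
  have hxmean : ∑ a, p a * x a = 0 := by
    simp only [hx, mul_sub, Finset.sum_sub_distrib, ← Finset.sum_mul, hpsum, ← hc]
    ring
  -- the gradient coordinates
  have hgcoord : ∀ b, p b * (r b - lam * Real.log (p b) - Vlam lam r θ) = lam * (p b * x b) := by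
    intro b
    rw [hkey b, hV]
    simp only [hx]
    ring
  have hε0 : 0 ≤ ε := le_trans (Real.sqrt_nonneg _) hgrad
  have hcoordbound : ∀ b, lam * (p b * |x b|) ≤ ε := by
    intro b
    have h1 : (lam * (p b * x b)) ^ 2 ≤ ∑ b', (softmax θ b' * (r b' - lam * Real.log (softmax θ b') - Vlam lam r θ)) ^ 2 := by
      rw [← hgcoord b]
      exact Finset.single_le_sum (f := fun b' =>
        (softmax θ b' * (r b' - lam * Real.log (softmax θ b') - Vlam lam r θ)) ^ 2)
        (fun a _ => sq_nonneg _) (Finset.mem_univ b)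
    have h2 : |lam * (p b * x b)| ≤ ε := by
      rw [← Real.sqrt_sq_eq_abs]
      exact le_trans (Real.sqrt_le_sqrt h1) hgrad
    calc lam * (p b * |x b|) = |lam * (p b * x b)| := by
          rw [abs_mul, abs_mul, abs_of_pos hlam, abs_of_pos (hppos b)]
      _ ≤ ε := h2
  -- min of p
  set pm : ℝ := Finset.univ.inf' Finset.univ_nonempty (softmax θ) with hpm
  have hpmpos : 0 < pm := by
    rw [hpm]
    obtain ⟨a, _, ha⟩ := Finset.exists_mem_eq_inf' Finset.univ_nonempty (softmax θ)
    rw [ha]; exact hppos a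
  have hpmle : ∀ b, pm ≤ p b := fun b => Finset.inf'_le _ (Finset.mem_univ b)
  -- M = max |x|
  set M : ℝ := Finset.univ.sup' Finset.univ_nonempty (fun a => |x a|) with hM
  have hM0 : 0 ≤ M := by
    obtain ⟨a⟩ := ‹Nonempty A›
    rw [hM]
    exact le_trans (abs_nonneg (x a)) (Finset.le_sup' (fun a => |x a|) (Finset.mem_univ a))
  have hxleM : ∀ a, |x a| ≤ M := fun a => by
    rw [hM]; exact Finset.le_sup' (fun a => |x a|) (Finset.mem_univ a)
  have hMbound : lam * (pm * M) ≤ ε := by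
    obtain ⟨b, _, hb⟩ := Finset.exists_mem_eq_sup' Finset.univ_nonempty (fun a => |x a|)
    rw [hM, hb]
    calc lam * (pm * |x b|) ≤ lam * (p b * |x b|) := by
          apply mul_le_mul_of_nonneg_left _ hlam.le
          exact mul_le_mul_of_nonneg_right (hpmle b) (abs_nonneg _)
      _ ≤ ε := hcoordbound b
  -- rewrite LHS: lam * log (Z * exp c * S) - lam*(c+L) with S = ∑ p exp(x)
  set S : ℝ := ∑ a, p a * Real.exp (x a) with hS
  have hSpos : 0 < S :=
    Finset.sum_pos (fun a _ => mul_pos (hppos a) (Real.exp_pos _)) Finset.univ_nonempty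
  have hsumexp : ∑ a, Real.exp (r a / lam) = (∑ a', Real.exp (θ a')) * Real.exp c * S := by
    rw [hS, Finset.mul_sum]
    refine Finset.sum_congr rfl fun a _ => ?_
    have : r a / lam = θ a + c + x a := by simp only [hx, hd]; ring
    rw [this, Real.exp_add, Real.exp_add]
    simp only [hp, softmax]
    field_simp
  have hLHS : lam * Real.log (∑ a, Real.exp (r a / lam)) - Vlam lam r θ = lam * Real.log S := by
    rw [hsumexp, hV, Real.log_mul (by positivity) hSpos.ne',
      Real.log_mul hZ.ne' (Real.exp_pos _).ne', Real.log_exp, ← hL]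
    ring
  -- S ≤ cosh M via chord
  have hSle : S ≤ (Real.exp M + Real.exp (-M)) / 2 := by
    rcases eq_or_lt_of_le hM0 with hMz | hMpos
    · have : ∀ a, x a = 0 := by
        intro a
        have := hxleM a
        rw [← hMz] at this
        exact abs_eq_zero.mp (le_antisymm this (abs_nonneg _))
      have hS1 : S = 1 := by
        rw [hS]
        simp only [this, Real.exp_zero, mul_one, hpsum]
      rw [hS1, ← hMz]
      norm_num
    · have chord : ∀ a, Real.exp (x a) ≤
          (Real.exp M + Real.exp (-M)) / 2 + x a * ((Real.exp M - Real.exp (-M)) / (2 * M)) := by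
        intro a
        have hax := abs_le.mp (hxleM a)
        set t : ℝ := (x a + M) / (2 * M) with ht
        have ht0 : 0 ≤ t := by
          apply div_nonneg _ (by linarith)
          linarith [hax.1]
        have ht1 : 0 ≤ 1 - t := by
          rw [ht]
          rw [sub_nonneg, div_le_one (by linarith)]
          linarith [hax.2]
        have hts : (1 - t) + t = 1 := by ring
        have hcomb : (1 - t) * (-M) + t * M = x a := by
          simp only [ht]
          field_simp
          ring
        have := convexOn_exp.2 (Set.mem_univ (-M)) (Set.mem_univ M) ht1 ht0 hts
        simp only [smul_eq_mul] at this
        rw [hcomb] at this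
        calc Real.exp (x a) ≤ (1 - t) * Real.exp (-M) + t * Real.exp M := this
          _ = (Real.exp M + Real.exp (-M)) / 2 + x a * ((Real.exp M - Real.exp (-M)) / (2 * M)) := by
              simp only [ht]
              field_simp
              ring
      calc S ≤ ∑ a, p a * ((Real.exp M + Real.exp (-M)) / 2 +
              x a * ((Real.exp M - Real.exp (-M)) / (2 * M))) := by
            refine Finset.sum_le_sum fun a _ => ?_
            exact mul_le_mul_of_nonneg_left (chord a) (hppos a).le
        _ = (Real.exp M + Real.exp (-M)) / 2 := by
            simp only [mul_add]
            rw [Finset.sum_add_distrib, ← Finset.sum_mul, hpsum]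
            have : ∑ a, p a * (x a * ((Real.exp M - Real.exp (-M)) / (2 * M)))
                = (∑ a, p a * x a) * ((Real.exp M - Real.exp (-M)) / (2 * M)) := by
              rw [Finset.sum_mul]
              exact Finset.sum_congr rfl fun a _ => by ring
            rw [this, hxmean]
            ring
  have hlogS : Real.log S ≤ M ^ 2 / 2 := by
    have h1 : S ≤ Real.exp (M ^ 2 / 2) := by
      refine le_trans hSle ?_
      have := Real.cosh_le_exp_half_sq M
      rwa [Real.cosh_eq] at this
    calc Real.log S ≤ Real.log (Real.exp (M ^ 2 / 2)) :=
          Real.log_le_log hSpos h1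
      _ = M ^ 2 / 2 := Real.log_exp _
  rw [hLHS]
  -- final: lam * log S ≤ lam * M^2/2 ≤ ε^2/(2 lam pm^2)
  have hsq : (lam * (pm * M)) ^ 2 ≤ ε ^ 2 := by
    apply sq_le_sq' _ hMbound
    nlinarith [mul_nonneg (mul_nonneg hlam.le hpmpos.le) hM0]
  have hfin : lam * (M ^ 2 / 2) ≤ ε ^ 2 / (2 * lam * pm ^ 2) := by
    rw [le_div_iff₀ (by positivity)]
    nlinarith [hsq]
  calc lam * Real.log S ≤ lam * (M ^ 2 / 2) :=
        mul_le_mul_of_nonneg_left hlogS hlam.le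
    _ ≤ ε ^ 2 / (2 * lam * pm ^ 2) := hfin
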